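/- If (tₙ) is a sequence of times with tₙ strictly decreasing to 0 and g(s)² ≥ 1/√(c(tₙ − s)) for all s < tₙ (c > 0), and ∫₀¹ g(s)² ds < ∞, then ∑_{n=1}^{∞} √(tₙ − t_{n+1}) < ∞. -/
import Mathlib


open MeasureTheory

theorem leray_gap_sum (c : ℝ) (hc : 0 < c) (g : ℝ → ENNReal) (t : ℕ → ℝ)
    (ht1 : ∀ n, 0 < t n ∧ t n ≤ 1) (hanti : StrictAnti t)
    (hlim : Filter.Tendsto t Filter.atTop (nhds 0))
    (hlow : ∀ n : ℕ, ∀ s : ℝ, 0 < s → s < t n →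
      (g s) ^ 2 ≥ (ENNReal.ofReal (c * (t n - s))) ^ (-(1:ℝ)/2))
    (hint : (∫⁻ s in Set.Ioc (0:ℝ) 1, (g s) ^ 2) < ⊤) :
    Summable (fun n => Real.sqrt (t n - t (n + 1))) := by
  set d : ℕ → ℝ := fun n => t n - t (n + 1) with hd_def
  have hd : ∀ n, 0 < d n := fun n => sub_pos.2 (hanti (Nat.lt_succ_self n))
  -- lower bound on the integral over each gap interval
  have key : ∀ n, ENNReal.ofReal ((c * d n) ^ (-(1:ℝ)/2) * d n)
      ≤ ∫⁻ s in Set.Ioo (t (n + 1)) (t n), g s ^ 2 := by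
    intro n
    have hcd : 0 < c * d n := mul_pos hc (hd n)
    have hb : ∀ s ∈ Set.Ioo (t (n + 1)) (t n),
        ENNReal.ofReal ((c * d n) ^ (-(1:ℝ)/2)) ≤ g s ^ 2 := by
      intro s hs
      have hs0 : 0 < s := lt_trans (ht1 (n + 1)).1 hs.1
      refine le_trans ?_ (hlow n s hs0 hs.2)
      rw [ENNReal.ofReal_rpow_of_pos (by nlinarith [hs.2] : (0:ℝ) < c * (t n - s))]
      apply ENNReal.ofReal_le_ofReal
      apply Real.rpow_le_rpow_of_nonpos (by nlinarith [hs.2]) ?_ (by norm_num)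
      have h1 : t n - s ≤ d n := by simp only [hd_def]; linarith [hs.1]
      nlinarith
    calc ENNReal.ofReal ((c * d n) ^ (-(1:ℝ)/2) * d n)
        = ENNReal.ofReal ((c * d n) ^ (-(1:ℝ)/2)) * volume (Set.Ioo (t (n + 1)) (t n)) := by
          rw [Real.volume_Ioo, ENNReal.ofReal_mul (Real.rpow_nonneg hcd.le _)]
      _ = ∫⁻ _ in Set.Ioo (t (n + 1)) (t n),
            ENNReal.ofReal ((c * d n) ^ (-(1:ℝ)/2)) := (setLIntegral_const _ _).symm
      _ ≤ ∫⁻ s in Set.Ioo (t (n + 1)) (t n), g s ^ 2 :=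
          setLIntegral_mono' measurableSet_Ioo hb
  -- the gap intervals are pairwise disjoint subsets of Ioc 0 1
  have hsum : (∑' n, ∫⁻ s in Set.Ioo (t (n + 1)) (t n), g s ^ 2)
      ≤ ∫⁻ s in Set.Ioc (0:ℝ) 1, g s ^ 2 := by
    rw [← lintegral_iUnion (fun n => measurableSet_Ioo) ?_]
    · apply lintegral_mono_set
      apply Set.iUnion_subset
      intro n s hs
      exact ⟨lt_trans (ht1 (n + 1)).1 hs.1, le_trans hs.2.le (ht1 n).2⟩
    · have hdisj : ∀ m n, m < n →
          Disjoint (Set.Ioo (t (m + 1)) (t m)) (Set.Ioo (t (n + 1)) (t n)) := by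
        intro m n h
        apply Set.disjoint_left.2
        intro s hs hs'
        have h1 : t n ≤ t (m + 1) := hanti.antitone (by omega)
        have := hs.1
        have := hs'.2
        linarith
      intro m n hmn
      rcases hmn.lt_or_gt with h | h
      · exact hdisj m n h
      · exact (hdisj n m h).symm
  have htop : (∑' n, ENNReal.ofReal ((c * d n) ^ (-(1:ℝ)/2) * d n)) ≠ ⊤ :=
    ne_top_of_le_ne_top hint.ne (le_trans (ENNReal.tsum_le_tsum key) hsum)
  have hsummable : Summable (fun n => (c * d n) ^ (-(1:ℝ)/2) * d n) := by
    have h := ENNReal.summable_toReal htop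
    have heq' : ∀ n, (ENNReal.ofReal ((c * d n) ^ (-(1:ℝ)/2) * d n)).toReal
        = (c * d n) ^ (-(1:ℝ)/2) * d n := fun n =>
      ENNReal.toReal_ofReal (mul_nonneg (Real.rpow_nonneg (mul_pos hc (hd n)).le _) (hd n).le)
    simpa [heq'] using h
  have heq : ∀ n, Real.sqrt (d n) = Real.sqrt c * ((c * d n) ^ (-(1:ℝ)/2) * d n) := by
    intro n
    have hcd : 0 < c * d n := mul_pos hc (hd n)
    have h1 : (c * d n) ^ (-(1:ℝ)/2) = (Real.sqrt c * Real.sqrt (d n))⁻¹ := by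
      rw [show (-(1:ℝ)/2) = -(1/2 : ℝ) by norm_num, Real.rpow_neg hcd.le,
        ← Real.sqrt_eq_rpow, Real.sqrt_mul hc.le]
    rw [h1]
    have hsc : (0:ℝ) < Real.sqrt c := Real.sqrt_pos.mpr hc
    have hsd : (0:ℝ) < Real.sqrt (d n) := Real.sqrt_pos.mpr (hd n)
    have hms : Real.sqrt (d n) * Real.sqrt (d n) = d n := Real.mul_self_sqrt (hd n).le
    field_simp
    nlinarith
  have : Summable (fun n => Real.sqrt (d n)) := by
    have := hsummable.mul_left (Real.sqrt c)
    exact this.congr (fun n => (heq n).symm)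
  exact this
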